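/- Let S ⊆ E^n with 0̄ ∈ S and a = χ^S. Then B'_k(a) = 0 for every k with 0 < k ≤ cor(S). -/

import Mathlib

open Finset

/-- Weight of a vector in the Boolean cube: the number of ones. -/
def wt {n : ℕ} (y : Fin n → Bool) : ℕ := (Finset.univ.filter fun i => y i = true).card

/-- The face `E^n_y(z) = {x : [x,y] = [z,y]}`: all `x` agreeing with `z` on the
support of `y`. -/
def face {n : ℕ} (y z : Fin n → Bool) : Finset (Fin n → Bool) :=
  Finset.univ.filter fun x => ∀ i, y i = true → x i = z i

/-- `χ^S` is correlation-immune of order `k`: all faces obtained by fixing `k`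
coordinates (i.e. faces `E^n_y(z)` with `wt y = k`) intersect `S` in the same
cardinality. -/
def CorrImmune {n : ℕ} (S : Finset (Fin n → Bool)) (k : ℕ) : Prop :=
  ∀ y₁ z₁ y₂ z₂ : Fin n → Bool, wt y₁ = k → wt y₂ = k →
    (face y₁ z₁ ∩ S).card = (face y₂ z₂ ∩ S).card

/-- `cor S` : the maximum order of correlation immunity of `χ^S`. -/
noncomputable def cor {n : ℕ} (S : Finset (Fin n → Bool)) : ℕ :=
  sSup {k | k ≤ n ∧ CorrImmune S k}

/-- Density `ρ(S) = |S| / 2^n`. -/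
def rho {n : ℕ} (S : Finset (Fin n → Bool)) : ℚ := (S.card : ℚ) / 2 ^ n

/-- `nei S`: the average number of neighbors in `S` of vertices of `S`,
`(1/|S|) ∑_{x∈S} |B(x) ∩ S| - 1`, where `B x` is the Hamming ball of radius 1. -/
def nei {n : ℕ} (S : Finset (Fin n → Bool)) : ℚ :=
  (∑ x ∈ S, ((S.filter fun y => hammingDist x y ≤ 1).card : ℚ)) / (S.card : ℚ) - 1

/-- Characteristic function of `S`, as a rational-valued function. -/
def chi {n : ℕ} (S : Finset (Fin n → Bool)) (x : Fin n → Bool) : ℚ := if x ∈ S then 1 else 0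

/-- Characteristic function of `S` as a 2-coloring (color 1 = membership in `S`). -/
def chiCol {n : ℕ} (S : Finset (Fin n → Bool)) (x : Fin n → Bool) : Fin 2 :=
  if x ∈ S then 1 else 0

/-- `Col` is a perfect coloring with parameter matrix `A`: every vertex of color `i`
has exactly `A i j` neighbors (at Hamming distance 1) of color `j`. -/
def IsPerfectColoring {n : ℕ} (Col : (Fin n → Bool) → Fin 2) (A : Fin 2 → Fin 2 → ℕ) : Prop :=
  ∀ x : Fin n → Bool, ∀ j : Fin 2,
    (Finset.univ.filter fun y => hammingDist x y = 1 ∧ Col y = j).card = A (Col x) j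

/-- Fourier transform `â(v) = ∑_u a(u) (-1)^{⟨u,v⟩}`. -/
def fourierT {n : ℕ} (a : (Fin n → Bool) → ℚ) (v : Fin n → Bool) : ℚ :=
  ∑ u : Fin n → Bool, a u * (-1) ^ ((Finset.univ.filter fun i => u i = true ∧ v i = true).card)

/-- Coordinatewise XOR. -/
def xorv {n : ℕ} (u v : Fin n → Bool) : Fin n → Bool := fun i => xor (u i) (v i)

/-- Weight distribution `B_i(a) = (1/|S|) |{(u,v) ∈ S×S : wt(u⊕v) = i}|`. -/
def Bdist {n : ℕ} (S : Finset (Fin n → Bool)) (i : ℕ) : ℚ :=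
  (((S ×ˢ S).filter fun p => wt (xorv p.1 p.2) = i).card : ℚ) / (S.card : ℚ)

/-- Kravchuk polynomial `P_k(i) = ∑_{j=0}^k (-1)^j C(i,j) C(n-i,k-j)`. -/
def krav (n k i : ℕ) : ℚ :=
  ∑ j ∈ Finset.range (k + 1),
    (-1 : ℚ) ^ j * (Nat.choose i j : ℚ) * (Nat.choose (n - i) (k - j) : ℚ)

/-- MacWilliams transform `B'_k(a) = (1/|S|) ∑_{i=0}^n B_i(a) P_k(i)`. -/
def Bmw {n : ℕ} (S : Finset (Fin n → Bool)) (k : ℕ) : ℚ :=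
  (∑ i ∈ Finset.range (n + 1), Bdist S i * krav n k i) / (S.card : ℚ)

-- Auxiliary lemmas

def sgn {n : ℕ} (u w : Fin n → Bool) : ℚ :=
  (-1) ^ ((Finset.univ.filter fun i => u i = true ∧ w i = true).card)

lemma sgn_prod {n : ℕ} (u w : Fin n → Bool) :
    sgn u w = ∏ i, (if u i = true ∧ w i = true then (-1 : ℚ) else 1) := by
  rw [Finset.prod_ite, Finset.prod_const, Finset.prod_const, one_pow, mul_one]
  rfl

lemma sgn_xor {n : ℕ} (u v w : Fin n → Bool) :
    sgn (xorv u v) w = sgn u w * sgn v w := by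
  rw [sgn_prod, sgn_prod, sgn_prod, ← Finset.prod_mul_distrib]
  refine Finset.prod_congr rfl fun i _ => ?_
  cases hu : u i <;> cases hv : v i <;> cases hw : w i <;> simp [xorv, hu, hv, hw]

lemma sgn_flip {n : ℕ} (v w : Fin n → Bool) (i0 : Fin n) (hw : w i0 = true) :
    sgn (Function.update v i0 (!(v i0))) w = - sgn v w := by
  rw [sgn_prod, sgn_prod]
  have hfun : (fun i => if (Function.update v i0 (!(v i0))) i = true ∧ w i = true then (-1:ℚ) else 1)
      = Function.update (fun i => if v i = true ∧ w i = true then (-1:ℚ) else 1) i0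
        (if (!(v i0)) = true ∧ w i0 = true then (-1:ℚ) else 1) := by
    funext i
    by_cases h : i = i0
    · subst h; simp
    · simp [Function.update_of_ne h]
  rw [hfun, Finset.prod_update_of_mem (Finset.mem_univ i0),
    ← Finset.mul_prod_erase Finset.univ _ (Finset.mem_univ i0)]
  cases hv : v i0 <;> simp [hw, hv, Finset.sdiff_singleton_eq_erase]

lemma sgn_mask {n : ℕ} (u y w : Fin n → Bool) (hwy : ∀ i, w i = true → y i = true) :
    sgn (fun i => u i && y i) w = sgn u w := by
  unfold sgn
  have h : (Finset.univ.filter fun i => (fun i => u i && y i) i = true ∧ w i = true)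
      = (Finset.univ.filter fun i => u i = true ∧ w i = true) := by
    apply Finset.filter_congr
    intro i _
    cases hwi : w i
    · simp
    · have := hwy i hwi; simp [this, hwi]
  rw [h]
lemma sum_sgn_T_zero {n : ℕ} (y w : Fin n → Bool) (hwy : ∀ i, w i = true → y i = true)
    (hw : ∃ i, w i = true) :
    ∑ v ∈ (Finset.univ.filter fun v : Fin n → Bool => ∀ i, v i = true → y i = true),
      sgn v w = 0 := by
  obtain ⟨i0, hi0⟩ := hw
  refine Finset.sum_involution (fun v _ => Function.update v i0 (!(v i0))) ?_ ?_ ?_ ?_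
  · intro v hv
    rw [sgn_flip v w i0 hi0]; ring
  · intro v hv _ hcontra
    have := congrFun hcontra i0
    simp at this
  · intro v hv
    simp only [Finset.mem_filter, Finset.mem_univ, true_and] at hv ⊢
    intro i hvi
    by_cases h : i = i0
    · subst h; exact hwy _ hi0
    · rw [Function.update_of_ne h] at hvi
      exact hv i hvi
  · intro v hv
    funext i
    by_cases h : i = i0
    · subst h; simp
    · simp [Function.update_of_ne h]

lemma fourierZeroAux {n : ℕ} (S : Finset (Fin n → Bool)) (m : ℕ)
    (hci : CorrImmune S m) (hmn : m ≤ n) (w : Fin n → Bool)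
    (hw1 : 1 ≤ wt w) (hwm : wt w ≤ m) :
    ∑ u ∈ S, sgn u w = 0 := by
  classical
  obtain ⟨Y, hsub, hYcard⟩ := Finset.exists_superset_card_eq
    (s := Finset.univ.filter fun i => w i = true) hwm (by simpa using hmn)
  set y : Fin n → Bool := fun i => decide (i ∈ Y) with hydef
  have hy : wt y = m := by
    rw [← hYcard]; unfold wt
    congr 1
    ext i; simp [hydef]
  have hwy : ∀ i, w i = true → y i = true := by
    intro i h
    simp only [hydef, decide_eq_true_eq]
    exact hsub (by simp [h])
  have hfib := Finset.sum_fiberwise_of_maps_to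
    (s := S) (g := fun u : Fin n → Bool => fun i => u i && y i)
    (t := (Finset.univ : Finset (Fin n → Bool)))
    (fun u _ => Finset.mem_univ _) (fun u => sgn u w)
  rw [← hfib]
  have hinner : ∀ v : Fin n → Bool,
      ∑ u ∈ S.filter (fun u => (fun i => u i && y i) = v), sgn u w
        = ((S.filter (fun u => (fun i => u i && y i) = v)).card : ℚ) * sgn v w := by
    intro v
    rw [Finset.sum_congr rfl (fun u hu => ?_), Finset.sum_const, nsmul_eq_mul]
    obtain ⟨-, hu⟩ := Finset.mem_filter.mp hu
    rw [← hu]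
    exact (sgn_mask u y w hwy).symm
  rw [Finset.sum_congr rfl (fun v _ => hinner v)]
  have hzero : ∀ v ∈ (Finset.univ : Finset (Fin n → Bool)),
      v ∉ (Finset.univ.filter fun v : Fin n → Bool => ∀ i, v i = true → y i = true) →
      ((S.filter (fun u => (fun i => u i && y i) = v)).card : ℚ) * sgn v w = 0 := by
    intro v _ hv
    simp only [Finset.mem_filter, Finset.mem_univ, true_and, not_forall] at hv
    obtain ⟨i, hvi, hyi⟩ := hv
    have : S.filter (fun u => (fun i => u i && y i) = v) = ∅ := by
      apply Finset.filter_false_of_mem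
      intro u _ hc
      have := congrFun hc i
      rw [hvi] at this
      simp [Bool.eq_false_iff.mpr hyi] at this
    rw [this]; simp
  rw [← Finset.sum_subset (Finset.subset_univ _) hzero]
  have hface : ∀ v ∈ (Finset.univ.filter fun v : Fin n → Bool => ∀ i, v i = true → y i = true),
      ((S.filter (fun u => (fun i => u i && y i) = v)).card : ℚ) * sgn v w
      = ((face y (fun _ => false) ∩ S).card : ℚ) * sgn v w := by
    intro v hv
    have hvT : ∀ i, v i = true → y i = true := by
      simpa using hv
    have heq : S.filter (fun u => (fun i => u i && y i) = v) = face y v ∩ S := by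
      ext u
      simp only [Finset.mem_filter, Finset.mem_inter, face, Finset.mem_univ, true_and,
        funext_iff]
      constructor
      · rintro ⟨hu, h⟩
        refine ⟨fun i hyi => ?_, hu⟩
        have hi := h i
        rw [hyi] at hi
        simpa using hi
      · rintro ⟨h, hu⟩
        refine ⟨hu, fun i => ?_⟩
        cases hyi : y i
        · simp only [hyi, Bool.and_false]
          cases hvi : v i
          · rfl
          · exact absurd (hvT i hvi) (by simp [hyi])
        · simp only [hyi, Bool.and_true]
          exact h i hyi
    rw [heq, hci y v y (fun _ => false) hy hy]
  have hex : ∃ i, w i = true := by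
    have h : (Finset.univ.filter fun i => w i = true).Nonempty :=
      Finset.card_pos.mp (by unfold wt at hw1; omega)
    obtain ⟨i, hi⟩ := h
    exact ⟨i, (Finset.mem_filter.mp hi).2⟩
  rw [Finset.sum_congr rfl hface, ← Finset.mul_sum, sum_sgn_T_zero y w hwy hex, mul_zero]
lemma count_support {n : ℕ} (A : Finset (Fin n)) (k j : ℕ) (hj : j ≤ k) :
    ((Finset.univ.filter fun w : Fin n → Bool =>
        wt w = k ∧ (A ∩ (Finset.univ.filter fun i => w i = true)).card = j)).card
      = A.card.choose j * (n - A.card).choose (k - j) := by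
  classical
  have hc : (n - A.card).choose (k - j) = (Aᶜ).card.choose (k - j) := by
    rw [Finset.card_compl]; simp
  rw [hc, ← Finset.card_powersetCard, ← Finset.card_powersetCard, ← Finset.card_product]
  apply Finset.card_bij'
    (i := fun w _ => (A ∩ (Finset.univ.filter fun i => w i = true),
      (Finset.univ.filter fun i => w i = true) \ A))
    (j := fun p _ => fun i => decide (i ∈ p.1 ∪ p.2))
  · intro w hw
    simp only [Finset.mem_filter, Finset.mem_univ, true_and] at hw
    obtain ⟨hwk, hwj⟩ := hw
    rw [Finset.mem_product]
    dsimp only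
    constructor
    · rw [Finset.mem_powersetCard]
      exact ⟨Finset.inter_subset_left, hwj⟩
    · rw [Finset.mem_powersetCard]
      constructor
      · intro i hi
        rw [Finset.mem_compl]
        exact (Finset.mem_sdiff.mp hi).2
      · have h1 := Finset.card_inter_add_card_sdiff
          (Finset.univ.filter fun i => w i = true) A
        rw [Finset.inter_comm] at h1
        unfold wt at hwk
        omega
  · intro p hp
    rw [Finset.mem_product] at hp
    obtain ⟨h1, h2⟩ := hp
    rw [Finset.mem_powersetCard] at h1 h2
    have hdisj : Disjoint p.1 p.2 := by
      apply Finset.disjoint_left.mpr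
      intro a ha1 ha2
      exact absurd (h1.1 ha1) (Finset.mem_compl.mp (h2.1 ha2))
    have hsupp : (Finset.univ.filter fun i => decide (i ∈ p.1 ∪ p.2) = true) = p.1 ∪ p.2 := by
      ext i; simp
    simp only [Finset.mem_filter, Finset.mem_univ, true_and]
    constructor
    · unfold wt
      rw [hsupp, Finset.card_union_of_disjoint hdisj, h1.2, h2.2]
      omega
    · rw [hsupp]
      have : A ∩ (p.1 ∪ p.2) = p.1 := by
        ext i
        simp only [Finset.mem_inter, Finset.mem_union]
        constructor
        · rintro ⟨hiA, hiC | hiD⟩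
          · exact hiC
          · exact absurd hiA (Finset.mem_compl.mp (h2.1 hiD))
        · intro hiC
          exact ⟨h1.1 hiC, Or.inl hiC⟩
      rw [this, h1.2]
  · intro w hw
    funext i
    have : (A ∩ (Finset.univ.filter fun i => w i = true)) ∪
        ((Finset.univ.filter fun i => w i = true) \ A)
        = (Finset.univ.filter fun i => w i = true) := by
      ext a
      simp only [Finset.mem_union, Finset.mem_inter, Finset.mem_sdiff]
      tauto
    rw [this]
    cases hwi : w i <;> simp [hwi]
  · intro p hp
    rw [Finset.mem_product] at hp
    obtain ⟨h1, h2⟩ := hp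
    rw [Finset.mem_powersetCard] at h1 h2
    have hsupp : (Finset.univ.filter fun i => decide (i ∈ p.1 ∪ p.2) = true) = p.1 ∪ p.2 := by
      ext i; simp
    have hA1 : A ∩ (p.1 ∪ p.2) = p.1 := by
      ext i
      simp only [Finset.mem_inter, Finset.mem_union]
      constructor
      · rintro ⟨hiA, hiC | hiD⟩
        · exact hiC
        · exact absurd hiA (Finset.mem_compl.mp (h2.1 hiD))
      · intro hiC
        exact ⟨h1.1 hiC, Or.inl hiC⟩
    have hA2 : (p.1 ∪ p.2) \ A = p.2 := by
      ext i
      simp only [Finset.mem_sdiff, Finset.mem_union]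
      constructor
      · rintro ⟨hiC | hiD, hiA⟩
        · exact absurd (h1.1 hiC) hiA
        · exact hiD
      · intro hiD
        exact ⟨Or.inr hiD, Finset.mem_compl.mp (h2.1 hiD)⟩
    rw [Prod.ext_iff]
    constructor
    · rw [hsupp, hA1]
    · rw [hsupp, hA2]

lemma krav_eq_sum {n : ℕ} (k : ℕ) (x : Fin n → Bool) :
    krav n k (wt x) = ∑ w ∈ Finset.univ.filter (fun w : Fin n → Bool => wt w = k), sgn x w := by
  classical
  have hmaps : ∀ w ∈ (Finset.univ.filter fun w : Fin n → Bool => wt w = k),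
      ((Finset.univ.filter fun i => x i = true) ∩
        (Finset.univ.filter fun i => w i = true)).card ∈ Finset.range (k+1) := by
    intro w hw
    rw [Finset.mem_range]
    have hwk : wt w = k := (Finset.mem_filter.mp hw).2
    have hss : (Finset.univ.filter fun i => x i = true) ∩
        (Finset.univ.filter fun i => w i = true) ⊆
        (Finset.univ.filter fun i => w i = true) := Finset.inter_subset_right
    have := Finset.card_le_card hss
    unfold wt at hwk
    omega
  rw [← Finset.sum_fiberwise_of_maps_to hmaps (fun w => sgn x w)]
  unfold krav
  apply Finset.sum_congr rfl
  intro j hj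
  have hjk : j ≤ k := by rw [Finset.mem_range] at hj; omega
  have hsgn : ∀ w ∈ (Finset.univ.filter fun w : Fin n → Bool => wt w = k).filter
      (fun w => ((Finset.univ.filter fun i => x i = true) ∩
        (Finset.univ.filter fun i => w i = true)).card = j),
      sgn x w = (-1 : ℚ) ^ j := by
    intro w hw
    rw [Finset.mem_filter] at hw
    unfold sgn
    rw [show (Finset.univ.filter fun i => x i = true ∧ w i = true)
        = (Finset.univ.filter fun i => x i = true) ∩
          (Finset.univ.filter fun i => w i = true) by ext i; simp, hw.2]
  rw [Finset.sum_congr rfl hsgn, Finset.sum_const, nsmul_eq_mul,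
    Finset.filter_filter, count_support _ k j hjk]
  have hwtx : (Finset.univ.filter fun i => x i = true).card = wt x := rfl
  rw [hwtx]
  push_cast
  ring
/-- If `0̄ ∈ S` then `B'_k(a) = 0` for every `k` with `0 < k ≤ cor S`. -/
theorem stmt14 {n : ℕ} (S : Finset (Fin n → Bool)) (h0 : (fun _ => false) ∈ S) :
    ∀ k : ℕ, 0 < k → k ≤ cor S → Bmw S k = 0 := by
  intro k hk hkcor
  classical
  have h0mem : 0 ∈ {k | k ≤ n ∧ CorrImmune S k} := by
    refine ⟨Nat.zero_le n, ?_⟩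
    intro y₁ z₁ y₂ z₂ h₁ h₂
    have e : ∀ y : Fin n → Bool, wt y = 0 → ∀ z, face y z = Finset.univ := by
      intro y hy z
      have hyf : ∀ i, y i ≠ true := by
        intro i hi
        have hne : (Finset.univ.filter fun i => y i = true).Nonempty :=
          ⟨i, by simp [hi]⟩
        rw [← Finset.card_pos] at hne
        unfold wt at hy
        omega
      unfold face
      rw [Finset.filter_true_of_mem]
      intro x _ i hi
      exact absurd hi (hyf i)
    rw [e y₁ h₁, e y₂ h₂]
  have hbdd : BddAbove {k | k ≤ n ∧ CorrImmune S k} := ⟨n, fun x hx => hx.1⟩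
  have hmem := Nat.sSup_mem ⟨0, h0mem⟩ hbdd
  have hci : CorrImmune S (cor S) := hmem.2
  have hcn : cor S ≤ n := hmem.1
  suffices h : ∑ i ∈ Finset.range (n + 1), Bdist S i * krav n k i = 0 by
    unfold Bmw
    rw [h, zero_div]
  unfold Bdist
  simp_rw [div_mul_eq_mul_div, ← Finset.sum_div]
  suffices h2 : ∑ i ∈ Finset.range (n + 1),
      (((S ×ˢ S).filter fun p => wt (xorv p.1 p.2) = i).card : ℚ) * krav n k i = 0 by
    rw [h2, zero_div]
  have hmaps : ∀ p ∈ S ×ˢ S, wt (xorv p.1 p.2) ∈ Finset.range (n + 1) := by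
    intro p _
    rw [Finset.mem_range]
    have h1 : wt (xorv p.1 p.2) ≤ n := by
      unfold wt
      calc (Finset.univ.filter fun i => xorv p.1 p.2 i = true).card
          ≤ (Finset.univ : Finset (Fin n)).card := Finset.card_filter_le _ _
        _ = n := by simp
    omega
  have key : ∀ i ∈ Finset.range (n + 1),
      (((S ×ˢ S).filter fun p => wt (xorv p.1 p.2) = i).card : ℚ) * krav n k i
        = ∑ p ∈ (S ×ˢ S).filter (fun p => wt (xorv p.1 p.2) = i),
            krav n k (wt (xorv p.1 p.2)) := by
    intro i _
    rw [Finset.sum_congr rfl (fun p hp => by rw [(Finset.mem_filter.mp hp).2]),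
      Finset.sum_const, nsmul_eq_mul]
  rw [Finset.sum_congr rfl key,
    Finset.sum_fiberwise_of_maps_to hmaps (fun p => krav n k (wt (xorv p.1 p.2)))]
  calc ∑ p ∈ S ×ˢ S, krav n k (wt (xorv p.1 p.2))
      = ∑ p ∈ S ×ˢ S, ∑ w ∈ Finset.univ.filter (fun w : Fin n → Bool => wt w = k),
          sgn p.1 w * sgn p.2 w := by
        refine Finset.sum_congr rfl fun p _ => ?_
        rw [krav_eq_sum]
        exact Finset.sum_congr rfl fun w _ => sgn_xor p.1 p.2 w
    _ = ∑ w ∈ Finset.univ.filter (fun w : Fin n → Bool => wt w = k),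
          ∑ p ∈ S ×ˢ S, sgn p.1 w * sgn p.2 w := Finset.sum_comm
    _ = ∑ w ∈ Finset.univ.filter (fun w : Fin n → Bool => wt w = k),
          (∑ u ∈ S, sgn u w) * (∑ v ∈ S, sgn v w) := by
        refine Finset.sum_congr rfl fun w _ => ?_
        rw [Finset.sum_product]
        exact (Finset.sum_mul_sum S S (fun u => sgn u w) (fun v => sgn v w)).symm
    _ = 0 := by
        apply Finset.sum_eq_zero
        intro w hw
        have hwk : wt w = k := (Finset.mem_filter.mp hw).2
        rw [fourierZeroAux S (cor S) hci hcn w (by omega) (by omega), zero_mul]
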